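/- Let x* ∈ ℝ^d, let X_1, …, X_n ∈ ℝ^d, let w ∈ ℝ^n, and let ε_1, …, ε_n ∈ ℝ with Y_i = μ(X_i) + ε_i. Suppose μ : ℝ^d → ℝ is Hölder continuous with constant a > 0 and exponent α > 0 and μ(0) = 0. Then |μ(x*) − Σ_{i=1}^n w_i Y_i| ≤ |Σ_{i=1}^n |w_i| μ(X_i^‡) − μ(x*)| + 2a Σ_{i=1}^n |w_i| 1(w_i < 0) ‖X_i‖^α + |Σ_{i=1}^n w_i ε_i|, where X_i^‡ = X_i if w_i ≥ 0 and X_i^‡ = −X_i if w_i < 0. -/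
import Mathlib


/-- Worst-case extrapolation error bound (Equation (4) of the paper).
For `μ` Hölder continuous with constant `a > 0`, exponent `α > 0`, and `μ 0 = 0`,
and `Y i = μ (X i) + ε i`, the error of the linear smoother is bounded by the
imbalance of the reflected points `Xr i` (where `Xr i = X i` if `w i ≥ 0` and
`Xr i = -X i` otherwise), the nonlinearity error of negative-weight points, and
the noise term. -/
theorem stmt_1 {d n : ℕ} (xs : EuclideanSpace ℝ (Fin d))
    (X : Fin n → EuclideanSpace ℝ (Fin d)) (w : Fin n → ℝ) (ε : Fin n → ℝ)
    (μ : EuclideanSpace ℝ (Fin d) → ℝ) (a α : ℝ) (ha : 0 < a) (hα : 0 < α)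
    (hHolder : ∀ x y : EuclideanSpace ℝ (Fin d), |μ x - μ y| ≤ a * ‖x - y‖ ^ α)
    (hzero : μ 0 = 0)
    (Y : Fin n → ℝ) (hY : ∀ i, Y i = μ (X i) + ε i) :
    |μ xs - ∑ i, w i * Y i| ≤
      |(∑ i, |w i| * μ (if 0 ≤ w i then X i else -X i)) - μ xs|
        + 2 * a * ∑ i, |w i| * (if w i < 0 then (1 : ℝ) else 0) * ‖X i‖ ^ α
        + |∑ i, w i * ε i| := by
  set Xr : Fin n → EuclideanSpace ℝ (Fin d) := fun i => if 0 ≤ w i then X i else -X i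
  have key : μ xs - ∑ i, w i * Y i =
      -((∑ i, |w i| * μ (Xr i)) - μ xs)
        + (∑ i, (|w i| * μ (Xr i) - w i * μ (X i)))
        + (-(∑ i, w i * ε i)) := by
    simp only [hY, mul_add, Finset.sum_add_distrib, Finset.sum_sub_distrib]
    ring
  have hterm : ∀ i : Fin n, |(|w i| * μ (Xr i) - w i * μ (X i))| ≤
      2 * a * (|w i| * (if w i < 0 then (1 : ℝ) else 0) * ‖X i‖ ^ α) := by
    intro i
    by_cases h : 0 ≤ w i
    · simp [Xr, h, abs_of_nonneg h, not_lt.mpr h]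
    · have hneg : w i < 0 := lt_of_not_ge h
      have habs : |w i| = -w i := abs_of_neg hneg
      simp only [Xr, if_neg h, if_pos hneg, mul_one]
      have : |w i| * μ (-X i) - w i * μ (X i) = |w i| * (μ (-X i) + μ (X i)) := by
        rw [habs]; ring
      rw [this, abs_mul, abs_abs]
      have hb : |μ (-X i) + μ (X i)| ≤ 2 * (a * ‖X i‖ ^ α) := by
        have h1 := hHolder (-X i) 0
        have h2 := hHolder (X i) 0
        simp [hzero] at h1 h2
        calc |μ (-X i) + μ (X i)| ≤ |μ (-X i)| + |μ (X i)| := abs_add_le _ _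
          _ ≤ a * ‖X i‖ ^ α + a * ‖X i‖ ^ α := by
              exact add_le_add h1 h2
          _ = 2 * (a * ‖X i‖ ^ α) := by ring
      calc |w i| * |μ (-X i) + μ (X i)| ≤ |w i| * (2 * (a * ‖X i‖ ^ α)) :=
            mul_le_mul_of_nonneg_left hb (abs_nonneg _)
        _ = 2 * a * (|w i| * ‖X i‖ ^ α) := by ring
  calc |μ xs - ∑ i, w i * Y i|
      ≤ |(-((∑ i, |w i| * μ (Xr i)) - μ xs)
            + (∑ i, (|w i| * μ (Xr i) - w i * μ (X i))))|
          + |(-(∑ i, w i * ε i))| := by rw [key]; exact abs_add_le _ _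
    _ ≤ |(-((∑ i, |w i| * μ (Xr i)) - μ xs))|
          + |(∑ i, (|w i| * μ (Xr i) - w i * μ (X i)))|
          + |(-(∑ i, w i * ε i))| := by
        gcongr
        exact abs_add_le _ _
    _ ≤ |(∑ i, |w i| * μ (Xr i)) - μ xs|
          + 2 * a * ∑ i, |w i| * (if w i < 0 then (1 : ℝ) else 0) * ‖X i‖ ^ α
          + |∑ i, w i * ε i| := by
        rw [abs_neg, abs_neg]
        gcongr
        calc |(∑ i, (|w i| * μ (Xr i) - w i * μ (X i)))|
            ≤ ∑ i, |(|w i| * μ (Xr i) - w i * μ (X i))| :=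
              Finset.abs_sum_le_sum_abs _ _
          _ ≤ ∑ i, 2 * a * (|w i| * (if w i < 0 then (1 : ℝ) else 0) * ‖X i‖ ^ α) :=
              Finset.sum_le_sum fun i _ => hterm i
          _ = 2 * a * ∑ i, |w i| * (if w i < 0 then (1 : ℝ) else 0) * ‖X i‖ ^ α := by
              rw [Finset.mul_sum]
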